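/- Let m ≥ n ≥ 1 and let μ be a partition of m+n. Then X^{(m,n)}_μ(t) = (t−1)·[t^{−m−1} D_t(μ)]_+ + D^{(n)}(μ), where D_t(μ) = ∑_{τ ◁ μ} t^{|τ|} (sum over all subpartitions of μ), D^{(n)}(μ) is the number of subpartitions of μ of weight n, and [f]_+ denotes the sum of the terms with nonnegative exponents of a Laurent polynomial f in t. -/

import Mathlib

open scoped BigOperators

namespace Green

noncomputable section

/-- The base field `F = ℚ(t)`, the field of rational functions in `t`. -/
abbrev FF : Type := RatFunc ℚ

/-- The indeterminate `t ∈ ℚ(t)`. -/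
def tF : FF := RatFunc.X

/-- The ring of symmetric functions over `F`, identified with the polynomial ring
`F[p₁, p₂, …]` on the power sums, variables indexed by positive integers. -/
abbrev SymF : Type := MvPolynomial ℕ+ FF

/-- The power sum `p_n` for `n ≥ 1` (junk value `1` if `n = 0`). -/
def pS (n : ℕ) : SymF := if h : 0 < n then MvPolynomial.X (⟨n, h⟩ : ℕ+) else 1

/-- `p_λ = p_{λ₁} ⋯ p_{λ_l}` for a partition given as a multiset of parts. -/
def pMs (m : Multiset ℕ) : SymF := (m.map pS).prod

/-- `z_λ = ∏_i i^{m_i} · m_i!` where `m_i` is the multiplicity of `i` in `λ`. -/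
def zMs (m : Multiset ℕ) : ℕ :=
  m.toFinset.prod fun i => i ^ m.count i * (m.count i).factorial

/-- `z_λ(t) = z_λ / ∏_j (1 - t^{λ_j})`. -/
def ztMs (m : Multiset ℕ) : FF := (zMs m : FF) / (m.map fun i => 1 - tF ^ i).prod

/-- `q_k`: equal to `0` for `k < 0`, `1` for `k = 0`, and `∑_{ν ⊢ k} z_ν(t)⁻¹ p_ν` for `k ≥ 1`. -/
def qq (k : ℤ) : SymF :=
  if k < 0 then 0
  else ∑ ν : Nat.Partition k.toNat, (ztMs ν.parts)⁻¹ • pMs ν.parts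

/-- Coefficients of `(1 - R)(∑_{k≥0} t^k R^k) = 1 + ∑_{k≥1} (t^k - t^{k-1}) R^k`. -/
def cRO : ℕ → FF
  | 0 => 1
  | k + 1 => tF ^ (k + 1) - tF ^ k

/-- Index pairs `i < j` for the raising operators `R_{ij}`. -/
abbrev PairsLT (l : ℕ) : Type := {pr : Fin l × Fin l // pr.1 < pr.2}

/-- The result of applying `∏_{i<j} R_{ij}^{k_{ij}}` to the integer tuple `α`,
where `R_{ij}` translates the index by `e_i - e_j`. -/
def raised {l : ℕ} (α : Fin l → ℤ) (k : PairsLT l → ℕ) : Fin l → ℤ := fun r =>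
  α r + ∑ pr : PairsLT l, (k pr : ℤ) *
    ((if pr.val.1 = r then 1 else 0) - (if pr.val.2 = r then 1 else 0))

/-- `q_β = q_{β₁} ⋯ q_{β_l}` for an integer tuple `β`. -/
def qTup {l : ℕ} (β : Fin l → ℤ) : SymF := ∏ i, qq (β i)

/-- The Hall–Littlewood function
`Q_α(t) = ∏_{1≤i<j≤l} (1 - R_{ij})(∑_{k≥0} t^k R_{ij}^k) q_α`,
the (finitely supported) expansion of the product of raising-operator series. -/
def QTup {l : ℕ} (α : Fin l → ℤ) : SymF :=
  finsum fun k : PairsLT l → ℕ => (∏ pr, cRO (k pr)) • qTup (raised α k)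

/-- `Q_α(t)` for an integer list `α`. -/
def QL (α : List ℤ) : SymF := QTup fun i : Fin α.length => α.get i

/-- The weakly decreasing sort of a multiset of naturals. -/
def sortDesc (m : Multiset ℕ) : List ℕ := (m.sort (· ≤ ·)).reverse

/-- `Q_λ(t)` for a partition given as a multiset of parts. -/
def QMs (m : Multiset ℕ) : SymF := QL ((sortDesc m).map fun i => (i : ℤ))

lemma tF_pow_ne_one {i : ℕ} (hi : 0 < i) : tF ^ i ≠ 1 := by
  intro h
  have h2 : (Polynomial.X : Polynomial ℚ) ^ i = 1 := by
    apply RatFunc.algebraMap_injective ℚ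
    rw [map_pow, map_one]
    simpa [tF, RatFunc.algebraMap_X] using h
  have := congrArg Polynomial.natDegree h2
  simp [Polynomial.natDegree_X_pow] at this
  omega

lemma oneSubPow_ne_zero {i : ℕ} (hi : 0 < i) : (1 : FF) - tF ^ i ≠ 0 := by
  intro h
  exact tF_pow_ne_one hi (by linear_combination -h)

lemma prodFac_ne_zero {s : Multiset ℕ} (h : ∀ x ∈ s, 0 < x) :
    (s.map fun i => (1 : FF) - tF ^ i).prod ≠ 0 := by
  apply Multiset.prod_ne_zero
  intro h0
  obtain ⟨i, hi, hieq⟩ := Multiset.mem_map.mp h0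
  exact oneSubPow_ne_zero (h i hi) hieq

lemma zMs_pos {s : Multiset ℕ} (h : ∀ x ∈ s, 0 < x) : 0 < zMs s := by
  apply Finset.prod_pos
  intro i hi
  have := h i (Multiset.mem_toFinset.mp hi)
  positivity

instance : CharZero FF := charZero_of_injective_algebraMap (algebraMap ℚ FF).injective

lemma ztMs_ne_zero {s : Multiset ℕ} (h : ∀ x ∈ s, 0 < x) : ztMs s ≠ 0 := by
  apply div_ne_zero _ (prodFac_ne_zero h)
  exact Nat.cast_ne_zero.mpr (zMs_pos h).ne'

def expo (s : Multiset ℕ) : ℕ+ →₀ ℕ :=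
  Multiset.toFinsupp (s.map fun x => (⟨max x 1, lt_of_lt_of_le zero_lt_one (le_max_right x 1)⟩ : ℕ+))

lemma expo_add (s t : Multiset ℕ) : expo (s + t) = expo s + expo t := by
  exact (congrArg _ (Multiset.map_add _ _ _)).trans (Multiset.toFinsupp_add _ _)

lemma expo_inj {s t : Multiset ℕ} (hs : ∀ x ∈ s, 0 < x) (ht : ∀ x ∈ t, 0 < x)
    (h : expo s = expo t) : s = t := by
  have h2 := Multiset.toFinsupp.injective h
  have h3 := congrArg (Multiset.map (fun p : ℕ+ => (p : ℕ))) h2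
  replace h3 := (Multiset.map_map _ _ _).symm.trans (h3.trans (Multiset.map_map _ _ _))
  have h4 : Multiset.map (fun x : ℕ => x ⊔ 1) s = Multiset.map (fun x : ℕ => x ⊔ 1) t := h3
  have e : ∀ u : Multiset ℕ, (∀ x ∈ u, 0 < x) → u.map (fun x : ℕ => x ⊔ 1) = u := by
    intro u hu
    calc u.map (fun x : ℕ => x ⊔ 1) = u.map id :=
          Multiset.map_congr rfl (fun x hx => sup_eq_left.mpr (hu x hx))
      _ = u := Multiset.map_id u
  rwa [e s hs, e t ht] at h4

lemma pMs_monomial {s : Multiset ℕ} (h : ∀ x ∈ s, 0 < x) :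
    pMs s = MvPolynomial.monomial (expo s) 1 := by
  induction s using Multiset.induction_on with
  | empty =>
    rw [show expo 0 = 0 from Multiset.toFinsupp_zero]
    simp [pMs]
  | cons a s ih =>
    have ha : 0 < a := h a (Multiset.mem_cons_self a s)
    rw [pMs, Multiset.map_cons, Multiset.prod_cons]
    rw [show (s.map pS).prod = pMs s from rfl, ih (fun x hx => h x (Multiset.mem_cons_of_mem hx))]
    rw [pS, dif_pos ha]
    rw [show (a ::ₘ s) = ({a} : Multiset ℕ) + s by simp, expo_add]
    unfold MvPolynomial.X
    rw [MvPolynomial.monomial_mul, one_mul]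
    congr 2
    rw [show expo {a} = Finsupp.single ⟨max a 1, lt_of_lt_of_le zero_lt_one (le_max_right a 1)⟩ 1
      from Multiset.toFinsupp_singleton _]
    rw [show (⟨max a 1, lt_of_lt_of_le zero_lt_one (le_max_right a 1)⟩ : ℕ+) = ⟨a, ha⟩ from
      PNat.coe_injective (by simp [Nat.max_eq_left ha])]

lemma zMs_zero : zMs 0 = 1 := by simp [zMs]

lemma zMs_cons (a : ℕ) (s : Multiset ℕ) :
    zMs (a ::ₘ s) = a * (s.count a + 1) * zMs s := by
  classical
  have hff : ∀ i ∈ s.toFinset.erase a,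
      i ^ (Multiset.count i (a ::ₘ s)) * (Multiset.count i (a ::ₘ s)).factorial
      = i ^ (Multiset.count i s) * (Multiset.count i s).factorial := by
    intro i hi
    rw [Multiset.count_cons_of_ne (Finset.ne_of_mem_erase hi)]
  unfold zMs
  rw [Multiset.toFinset_cons,
    ← Finset.mul_prod_erase _ _ (Finset.mem_insert_self a s.toFinset),
    Finset.erase_insert_eq_erase, Finset.prod_congr rfl hff, Multiset.count_cons_self]
  by_cases ha : a ∈ s.toFinset
  · rw [← Finset.mul_prod_erase _ _ ha, Nat.factorial_succ, pow_succ]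
    ring
  · have hc : Multiset.count a s = 0 := by
      rw [Multiset.count_eq_zero]
      exact fun hm => ha (Multiset.mem_toFinset.mpr hm)
    rw [hc, Finset.erase_eq_of_notMem ha]
    simp [Nat.factorial]

lemma count_powerset_cons (a : ℕ) (s ν : Multiset ℕ) :
    Multiset.count ν (a ::ₘ s).powerset
      = Multiset.count ν s.powerset
        + (if a ∈ ν then Multiset.count (ν.erase a) s.powerset else 0) := by
  classical
  rw [Multiset.powerset_cons, Multiset.count_add]
  congr 1
  split_ifs with h
  · conv_lhs => rw [← Multiset.cons_erase h]
    exact Multiset.count_map_eq_count' _ _ (fun x y hxy => (Multiset.cons_inj_right a).mp hxy) _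
  · rw [Multiset.count_eq_zero]
    intro hmem
    obtain ⟨u, _, rfl⟩ := Multiset.mem_map.mp hmem
    exact h (Multiset.mem_cons_self a u)

lemma le_of_le_cons_not_mem {a : ℕ} {ν s : Multiset ℕ} (hν : ν ≤ a ::ₘ s) (ha : a ∉ ν) :
    ν ≤ s := by
  rw [Multiset.le_iff_count] at hν ⊢
  intro b
  rcases eq_or_ne b a with rfl | hb
  · simp [Multiset.count_eq_zero_of_notMem ha]
  · simpa [Multiset.count_cons_of_ne hb] using hν b

lemma cons_sub_of_not_mem {a : ℕ} {ν s : Multiset ℕ} (ha : a ∉ ν) :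
    (a ::ₘ s) - ν = a ::ₘ (s - ν) := by
  ext b
  rcases eq_or_ne b a with rfl | hb
  · simp [Multiset.count_sub, Multiset.count_eq_zero_of_notMem ha]
  · simp [Multiset.count_sub, Multiset.count_cons_of_ne hb]

lemma key_count (μ : Multiset ℕ) : ∀ ν ≤ μ,
    Multiset.count ν μ.powerset * (zMs ν * zMs (μ - ν)) = zMs μ := by
  classical
  induction μ using Multiset.induction_on with
  | empty =>
    intro ν hν
    rw [Multiset.le_zero.mp hν]
    simp [zMs_zero]
  | cons a s ih =>
    intro ν hν
    by_cases ha : a ∈ ν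
    · -- ν = a ::ₘ ν'
      set ν' := ν.erase a with hν'def
      have hcons : a ::ₘ ν' = ν := Multiset.cons_erase ha
      have hν's : ν' ≤ s := by
        have := Multiset.erase_le_erase a hν
        rwa [Multiset.erase_cons_head] at this
      have hsub : (a ::ₘ s) - ν = s - ν' := by
        rw [← hcons]
        ext b
        rcases eq_or_ne b a with rfl | hb
        · simp [Multiset.count_sub]
        · simp [Multiset.count_sub, Multiset.count_cons_of_ne hb]
      have hzν : zMs ν = a * (ν'.count a + 1) * zMs ν' := by rw [← hcons, zMs_cons]
      rw [count_powerset_cons, if_pos ha, hsub, ← hν'def]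
      set m := s.count a with hm
      set k' := ν'.count a with hk'
      have ihν' := ih ν' hν's
      by_cases hνs : ν ≤ s
      · have hk'm : k' + 1 ≤ m := by
          have := Multiset.le_iff_count.mp hνs a
          rw [← hcons] at this
          simpa [hk', hm] using this
        have ihν := ih ν hνs
        have hsν : s - ν' = a ::ₘ (s - ν) := by
          rw [← hcons]
          ext b
          rcases eq_or_ne b a with rfl | hb
          · simp only [Multiset.count_sub, Multiset.count_cons_self, ← hk', ← hm]
            omega
          · simp [Multiset.count_sub, Multiset.count_cons_of_ne hb,
              Multiset.count_erase_of_ne hb]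
        have hzsν : zMs (s - ν') = a * ((s - ν).count a + 1) * zMs (s - ν) := by
          rw [hsν, zMs_cons]
        have hcnt : (s - ν).count a = m - (k' + 1) := by
          rw [Multiset.count_sub, ← hcons, Multiset.count_cons_self, ← hk', ← hm]
        rw [zMs_cons, hzν, hzsν, hcnt]
        have h1 : Multiset.count ν s.powerset * (zMs ν * zMs (s - ν)) = zMs s := ihν
        rw [hzν] at h1
        -- goal algebra
        rw [add_mul, ← hm]
        have e1 : Multiset.count ν s.powerset *
            (a * (k' + 1) * zMs ν' * (a * (m - (k' + 1) + 1) * zMs (s - ν)))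
            = a * (m - (k' + 1) + 1) * zMs s := by
          rw [← h1]; ring
        have e2 : Multiset.count ν' s.powerset *
            (a * (k' + 1) * zMs ν' * (a * (m - (k' + 1) + 1) * zMs (s - ν)))
            = a * (k' + 1) * (Multiset.count ν' s.powerset * (zMs ν' * zMs (s - ν')))
              := by rw [hzsν, hcnt]; ring
        rw [e1, e2, ihν']
        have hsum : m - (k' + 1) + 1 + (k' + 1) = m + 1 := by omega
        calc a * (m - (k' + 1) + 1) * zMs s + a * (k' + 1) * zMs s
            = a * ((m - (k' + 1) + 1) + (k' + 1)) * zMs s := by ring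
          _ = a * (m + 1) * zMs s := by rw [hsum]
      · -- k' = m, ν not ≤ s
        have hk'le : k' ≤ m := by
          have h1 := Multiset.le_iff_count.mp hν a
          rw [← hcons, Multiset.count_cons_self, Multiset.count_cons_self, ← hk', ← hm] at h1
          omega
        have hk'm : k' = m := by
          by_contra hne
          apply hνs
          rw [Multiset.le_iff_count]
          intro b
          by_cases hb : b = a
          · subst hb
            rw [← hcons, Multiset.count_cons_self, ← hk', ← hm]
            omega
          · have h3 := Multiset.le_iff_count.mp hν's b
            have h4 : Multiset.count b ν' = Multiset.count b ν := by
              rw [hν'def, Multiset.count_erase_of_ne hb]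
            rw [h4] at h3
            exact h3
        have hc0 : Multiset.count ν s.powerset = 0 := by
          rw [Multiset.count_eq_zero]
          intro hm2
          exact hνs (Multiset.mem_powerset.mp hm2)
        rw [hc0, zero_add, zMs_cons, ← hm, hzν, ← ihν', hk'm]
        ring
    · have hνs : ν ≤ s := le_of_le_cons_not_mem hν ha
      rw [count_powerset_cons, if_neg ha, add_zero, cons_sub_of_not_mem ha, zMs_cons, zMs_cons]
      have hcnt : (s - ν).count a = s.count a := by
        rw [Multiset.count_sub, Multiset.count_eq_zero_of_notMem ha, Nat.sub_zero]
      rw [hcnt, ← ih ν hνs]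
      ring

instance : Unique (PairsLT 2) where
  default := ⟨((0 : Fin 2), (1 : Fin 2)), by decide⟩
  uniq := by decide

lemma qq_neg {k : ℤ} (hk : k < 0) : qq k = 0 := if_pos hk

lemma QTup_two (α : Fin 2 → ℤ) :
    QTup α = ∑ᶠ j : ℕ, cRO j • (qq (α 0 + j) * qq (α 1 - j)) := by
  rw [QTup, ← finsum_comp_equiv (Equiv.funUnique (PairsLT 2) ℕ).symm]
  apply finsum_congr
  intro j
  have hk : ∀ pr : PairsLT 2, ((Equiv.funUnique (PairsLT 2) ℕ).symm j) pr = j := fun _ => rfl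
  have hd : ((default : PairsLT 2) : Fin 2 × Fin 2) = ((0 : Fin 2), (1 : Fin 2)) := rfl
  congr 1
  · rw [Fintype.prod_unique, hk]
  · rw [qTup, Fin.prod_univ_two]
    congr 1
    · congr 1
      rw [raised, Fintype.sum_unique, hk, hd]
      norm_num
    · congr 1
      rw [raised, Fintype.sum_unique, hk, hd]
      norm_num
      ring

lemma QTup_two_eq_sum (m n : ℕ) :
    QTup ![(m : ℤ), (n : ℤ)] = ∑ j ∈ Finset.range (n + 1),
      cRO j • (qq ((m : ℤ) + j) * qq ((n : ℤ) - j)) := by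
  rw [QTup_two]
  apply finsum_eq_sum_of_support_subset
  intro j hj
  simp only [Function.mem_support, Ne] at hj
  by_contra hmem
  simp only [Finset.coe_range, Set.mem_Iio, not_lt] at hmem
  apply hj
  have h0 : qq ((n : ℤ) - j) = 0 := qq_neg (by omega)
  rw [Matrix.cons_val_one, Matrix.cons_val_zero, Matrix.cons_val_zero, h0, mul_zero, smul_zero]

lemma sortDesc_pair {m n : ℕ} (hmn : n ≤ m) : sortDesc ↑[m, n] = [m, n] := by
  rw [sortDesc]
  have h1 : Multiset.sort ↑[m, n] (· ≤ ·) = [n, m] := by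
    apply List.Perm.eq_of_pairwise' (Multiset.pairwise_sort _ _) ?_ (Multiset.coe_eq_coe.mp ?_)
    · simp [hmn]
    · rw [Multiset.sort_eq]
      exact Multiset.coe_eq_coe.mpr (List.Perm.swap _ _ _)
  rw [h1]
  rfl

lemma QMs_pair {m n : ℕ} (hmn : n ≤ m) : QMs ↑[m, n] = QTup ![(m : ℤ), (n : ℤ)] := by
  rw [QMs, sortDesc_pair hmn]
  show QTup (fun i : Fin 2 => [(m : ℤ), (n : ℤ)].get i) = _
  exact congrArg QTup (funext fun i => by fin_cases i <;> rfl)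



lemma qq_ofNat (a : ℕ) :
    qq (a : ℤ) = ∑ ν : Nat.Partition a, (ztMs ν.parts)⁻¹ • pMs ν.parts := by
  rw [qq, if_neg (by omega)]
  have h : ((a : ℤ)).toNat = a := Int.toNat_natCast a
  rw [h]

lemma sum_counts (μM : Multiset ℕ) (p : Multiset ℕ → Prop) [DecidablePred p] :
    Multiset.card (μM.powerset.filter p)
      = ∑ s ∈ μM.powerset.toFinset.filter p, Multiset.count s μM.powerset := by
  rw [← Multiset.toFinset_sum_count_eq (μM.powerset.filter p), Multiset.toFinset_filter]
  apply Finset.sum_congr rfl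
  intro s hs
  exact Multiset.count_filter_of_pos (Finset.mem_filter.mp hs).2

lemma zt_ratio {μM νp ρp : Multiset ℕ} (hpos : ∀ x ∈ μM, 0 < x) (h : νp + ρp = μM) :
    ztMs μM * ((ztMs νp)⁻¹ * (ztMs ρp)⁻¹) = (Multiset.count νp μM.powerset : FF) := by
  have hνpos : ∀ x ∈ νp, 0 < x := fun x hx => hpos x (h ▸ Multiset.mem_add.mpr (Or.inl hx))
  have hρpos : ∀ x ∈ ρp, 0 < x := fun x hx => hpos x (h ▸ Multiset.mem_add.mpr (Or.inr hx))
  have hle : νp ≤ μM := h ▸ Multiset.le_add_right νp ρp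
  have hsub : μM - νp = ρp := by rw [← h]; exact add_tsub_cancel_left νp ρp
  have hkey0 := key_count μM νp hle
  rw [hsub] at hkey0
  have hkey : (Multiset.count νp μM.powerset : FF) * ((zMs νp : FF) * (zMs ρp : FF))
      = (zMs μM : FF) := by exact_mod_cast congrArg (Nat.cast (R := FF)) hkey0
  have hPμ : (μM.map fun i => (1 : FF) - tF ^ i).prod
      = (νp.map fun i => (1 : FF) - tF ^ i).prod * (ρp.map fun i => (1 : FF) - tF ^ i).prod := by
    rw [← h, Multiset.map_add, Multiset.prod_add]
  have hPν := prodFac_ne_zero hνpos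
  have hPρ := prodFac_ne_zero hρpos
  have hZν : (zMs νp : FF) ≠ 0 := Nat.cast_ne_zero.mpr (zMs_pos hνpos).ne'
  have hZρ : (zMs ρp : FF) ≠ 0 := Nat.cast_ne_zero.mpr (zMs_pos hρpos).ne'
  rw [ztMs, ztMs, ztMs, hPμ, inv_div, inv_div, div_mul_div_comm, div_mul_div_comm, div_eq_iff
    (mul_ne_zero (mul_ne_zero hPν hPρ) (mul_ne_zero hZν hZρ))]
  linear_combination (-(νp.map fun i => (1 : FF) - tF ^ i).prod *
    (ρp.map fun i => (1 : FF) - tF ^ i).prod) * hkey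

lemma coeff_qq_mul (μM : Multiset ℕ) (hpos : ∀ x ∈ μM, 0 < x) (a b : ℕ)
    (hab : a + b = μM.sum) :
    ztMs μM * MvPolynomial.coeff (expo μM) (qq (a : ℤ) * qq (b : ℤ))
      = (Multiset.card (μM.powerset.filter (fun s => s.sum = a)) : FF) := by
  classical
  rw [qq_ofNat, qq_ofNat, Finset.sum_mul_sum, ← Finset.sum_product',
    MvPolynomial.coeff_sum, Finset.mul_sum]
  have hterm : ∀ p : Nat.Partition a × Nat.Partition b,
      ztMs μM * MvPolynomial.coeff (expo μM)
        (((ztMs p.1.parts)⁻¹ • pMs p.1.parts) * ((ztMs p.2.parts)⁻¹ • pMs p.2.parts))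
      = if p.1.parts + p.2.parts = μM
          then (Multiset.count p.1.parts μM.powerset : FF) else 0 := by
    intro p
    have h1pos : ∀ x ∈ p.1.parts, 0 < x := fun x hx => p.1.parts_pos hx
    have h2pos : ∀ x ∈ p.2.parts, 0 < x := fun x hx => p.2.parts_pos hx
    rw [smul_mul_smul_comm, pMs_monomial h1pos, pMs_monomial h2pos,
      MvPolynomial.monomial_mul, one_mul, MvPolynomial.coeff_smul,
      MvPolynomial.coeff_monomial]
    by_cases hcond : p.1.parts + p.2.parts = μM
    · rw [if_pos (by rw [← expo_add, hcond]), if_pos hcond, smul_eq_mul, mul_one]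
      exact zt_ratio hpos hcond
    · rw [if_neg, if_neg hcond]
      · simp
      · intro hexpo
        exact hcond (expo_inj (fun x hx => by
            rcases Multiset.mem_add.mp hx with hx | hx
            exacts [h1pos x hx, h2pos x hx]) hpos (by rw [expo_add]; exact hexpo))
  rw [Finset.sum_congr rfl (fun p _ => hterm p), ← Finset.sum_filter,
    sum_counts μM (fun s => s.sum = a), Nat.cast_sum]
  apply Finset.sum_bij (i := fun p _ => p.1.parts)
  · rintro p hp
    rw [Finset.mem_filter] at hp ⊢
    refine ⟨Multiset.mem_toFinset.mpr (Multiset.mem_powerset.mpr ?_), p.1.parts_sum⟩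
    rw [← hp.2]
    exact Multiset.le_add_right _ _
  · rintro p hp q hq hpq
    rw [Finset.mem_filter] at hp hq
    have h2 : p.2.parts = q.2.parts := by
      have := hp.2.trans hq.2.symm
      rw [hpq] at this
      exact add_left_cancel this
    exact Prod.ext (Nat.Partition.ext hpq) (Nat.Partition.ext h2)
  · rintro s hs
    rw [Finset.mem_filter, Multiset.mem_toFinset, Multiset.mem_powerset] at hs
    obtain ⟨hle, hsum⟩ := hs
    have hspos : ∀ x ∈ s, 0 < x := fun x hx => hpos x (Multiset.mem_of_le hle hx)
    have hsum2 : (μM - s).sum = b := by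
      have h3 : (s + (μM - s)).sum = μM.sum := by rw [add_tsub_cancel_of_le hle]
      rw [Multiset.sum_add] at h3
      omega
    refine ⟨(⟨s, fun hx => hspos _ hx, hsum⟩,
      ⟨μM - s, fun hx => hpos _ (Multiset.mem_of_le (Multiset.sub_le_self _ _) hx), hsum2⟩),
      ?_, rfl⟩
    rw [Finset.mem_filter]
    exact ⟨Finset.mem_univ _, add_tsub_cancel_of_le hle⟩
  · intro p hp
    rfl

lemma count_powerset_compl {μM s : Multiset ℕ} (hpos : ∀ x ∈ μM, 0 < x) (hs : s ≤ μM) :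
    Multiset.count s μM.powerset = Multiset.count (μM - s) μM.powerset := by
  have h1 := key_count μM s hs
  have h2 := key_count μM (μM - s) (Multiset.sub_le_self _ _)
  rw [tsub_tsub_cancel_of_le hs] at h2
  have hz : 0 < zMs s * zMs (μM - s) :=
    mul_pos (zMs_pos fun x hx => hpos x (Multiset.mem_of_le hs hx))
      (zMs_pos fun x hx => hpos x (Multiset.mem_of_le (Multiset.sub_le_self _ _) hx))
  apply Nat.eq_of_mul_eq_mul_right hz
  rw [h1, ← h2]
  ring

lemma cnt_symm {μM : Multiset ℕ} (hpos : ∀ x ∈ μM, 0 < x) {a b : ℕ}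
    (hab : a + b = μM.sum) :
    Multiset.card (μM.powerset.filter (fun s => s.sum = a))
      = Multiset.card (μM.powerset.filter (fun s => s.sum = b)) := by
  classical
  rw [sum_counts, sum_counts]
  apply Finset.sum_bij (i := fun s _ => μM - s)
  · intro s hs
    rw [Finset.mem_filter, Multiset.mem_toFinset, Multiset.mem_powerset] at hs ⊢
    refine ⟨Multiset.sub_le_self _ _, ?_⟩
    have h3 : (s + (μM - s)).sum = μM.sum := by rw [add_tsub_cancel_of_le hs.1]
    rw [Multiset.sum_add] at h3
    omega
  · intro s hst t hti hst2
    rw [Finset.mem_filter, Multiset.mem_toFinset, Multiset.mem_powerset] at hst hti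
    have := congrArg (fun u => μM - u) hst2
    simpa [tsub_tsub_cancel_of_le hst.1, tsub_tsub_cancel_of_le hti.1] using this
  · intro s hs
    rw [Finset.mem_filter, Multiset.mem_toFinset, Multiset.mem_powerset] at hs
    refine ⟨μM - s, ?_, tsub_tsub_cancel_of_le hs.1⟩
    rw [Finset.mem_filter, Multiset.mem_toFinset, Multiset.mem_powerset]
    refine ⟨Multiset.sub_le_self _ _, ?_⟩
    have h3 : (s + (μM - s)).sum = μM.sum := by rw [add_tsub_cancel_of_le hs.1]
    rw [Multiset.sum_add] at h3
    omega
  · intro s hs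
    rw [Finset.mem_filter, Multiset.mem_toFinset, Multiset.mem_powerset] at hs
    exact count_powerset_compl hpos hs.1

lemma card_filter_powerset (μ : List ℕ) (a : ℕ) :
    Multiset.card (((↑μ : Multiset ℕ).powerset).filter (fun s => s.sum = a))
      = (μ.sublists.filter (fun τ => τ.sum = a)).length := by
  classical
  rw [Multiset.powerset_coe, Multiset.filter_coe, Multiset.coe_card, List.filter_map,
    List.length_map]
  congr 1

lemma list_group (B : ℕ) (f : ℕ → FF) :
    ∀ l : List (List ℕ), (∀ τ ∈ l, τ.sum < B) →
    (l.map (fun τ => f τ.sum)).sum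
      = ∑ j ∈ Finset.range B, ((l.filter (fun τ => τ.sum = j)).length : FF) * f j := by
  intro l
  induction l with
  | nil => simp
  | cons τ l ih =>
    intro h
    rw [List.map_cons, List.sum_cons, ih (fun x hx => h x (List.mem_cons_of_mem _ hx))]
    have hτ : τ.sum ∈ Finset.range B := Finset.mem_range.mpr (h τ List.mem_cons_self)
    have hsplit : ∀ j, (((τ :: l).filter (fun τ' => τ'.sum = j)).length : FF)
        = (if τ.sum = j then 1 else 0) + ((l.filter (fun τ' => τ'.sum = j)).length : FF) := by
      intro j
      by_cases hc : τ.sum = j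
      · subst hc
        rw [List.filter_cons]
        simp
        ring
      · rw [List.filter_cons]
        simp [hc]
    simp only [hsplit, add_mul, Finset.sum_add_distrib]
    congr 1
    rw [Finset.sum_congr rfl (fun j _ => by rw [ite_mul, one_mul, zero_mul]),
      Finset.sum_ite_eq, if_pos hτ]

lemma sum_range_add' (f : ℕ → FF) (a b : ℕ) :
    ∑ j ∈ Finset.range (a + b), f j
      = (∑ j ∈ Finset.range a, f j) + ∑ i ∈ Finset.range b, f (a + i) := by
  induction b with
  | zero => simp
  | succ b ih =>
    rw [show a + (b + 1) = (a + b) + 1 by ring, Finset.sum_range_succ, ih,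
      Finset.sum_range_succ]
    ring


/-- For `m ≥ n ≥ 1` and a partition `μ ⊢ m+n`,
`X^{(m,n)}_μ(t) = (t-1)·[t^{-m-1} D_t(μ)]_+ + D^{(n)}(μ)` where
`D_t(μ) = ∑_{τ ◁ μ} t^{|τ|}`, `[·]_+` keeps the terms with nonnegative exponents
(so `[t^{-m-1}D_t(μ)]_+ = ∑_{τ ◁ μ, |τ| ≥ m+1} t^{|τ|-m-1}`), and `D^{(n)}(μ)` is the
number of subpartitions of `μ` of weight `n`. -/
theorem statement8 (m n : ℕ) (hmn : n ≤ m) (hn : 1 ≤ n) (μ : List ℕ)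
    (hsort : μ.Pairwise (· ≥ ·)) (hpos : ∀ x ∈ μ, 0 < x) (hsum : μ.sum = m + n)
    (X : Multiset ℕ → Multiset ℕ → FF)
    (hX : ∀ ν : Multiset ℕ, QMs ν =
      ∑ P : Nat.Partition (Multiset.sum ν), ((ztMs P.parts)⁻¹ * X ν P.parts) • pMs P.parts) :
    X (↑([m, n] : List ℕ)) (↑μ) =
      (tF - 1) * ((μ.sublists.map fun τ =>
          if m + 1 ≤ τ.sum then tF ^ (τ.sum - (m + 1)) else 0).sum)
        + ((μ.sublists.filter fun τ => τ.sum = n).length : FF) := by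
  classical
  have hposM : ∀ x ∈ (↑μ : Multiset ℕ), 0 < x := by
    intro x hx
    exact hpos x (by simpa using hx)
  have hsumM : (↑μ : Multiset ℕ).sum = m + n := by
    rw [Multiset.sum_coe, hsum]
  have hztne : ztMs ↑μ ≠ 0 := ztMs_ne_zero hposM
  -- the coefficient of p_μ in Q_{(m,n)}
  have hQ := hX ↑[m, n]
  have hsum2 : Multiset.sum ↑[m, n] = m + n := by simp
  rw [hsum2, QMs_pair hmn, QTup_two_eq_sum] at hQ
  have hco := congrArg (MvPolynomial.coeff (expo ↑μ)) hQ
  rw [MvPolynomial.coeff_sum, MvPolynomial.coeff_sum] at hco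
  simp only [MvPolynomial.coeff_smul, smul_eq_mul] at hco
  let P0 : Nat.Partition (m + n) := ⟨↑μ, fun hx => hposM _ hx, hsumM⟩
  have hR : (∑ P : Nat.Partition (m + n),
      ((ztMs P.parts)⁻¹ * X ↑[m, n] P.parts) * MvPolynomial.coeff (expo ↑μ) (pMs P.parts))
      = (ztMs ↑μ)⁻¹ * X ↑[m, n] ↑μ := by
    rw [Finset.sum_eq_single P0]
    · rw [pMs_monomial (fun x hx => P0.parts_pos hx), MvPolynomial.coeff_monomial]
      have : P0.parts = ↑μ := rfl
      rw [this, if_pos rfl, mul_one]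
    · intro P _ hne
      rw [pMs_monomial (fun x hx => P.parts_pos hx), MvPolynomial.coeff_monomial]
      rw [if_neg, mul_zero]
      intro he
      exact hne (Nat.Partition.ext (expo_inj (fun x hx => P.parts_pos hx) hposM he))
    · intro hni
      exact absurd (Finset.mem_univ P0) hni
  rw [hR] at hco
  have hXval : X ↑[m, n] ↑μ = ztMs ↑μ *
      ∑ j ∈ Finset.range (n + 1), cRO j *
        MvPolynomial.coeff (expo ↑μ) (qq ((m : ℤ) + j) * qq ((n : ℤ) - j)) := by
    rw [hco, ← mul_assoc, mul_inv_cancel₀ hztne, one_mul]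
  -- each coefficient counts subpartitions
  have hcnt : ∀ j ≤ n, ztMs ↑μ *
      MvPolynomial.coeff (expo ↑μ) (qq ((m : ℤ) + j) * qq ((n : ℤ) - j))
      = (Multiset.card (((↑μ : Multiset ℕ).powerset).filter (fun s => s.sum = m + j)) : FF) := by
    intro j hj
    have h1 : ((m : ℤ) + j) = ((m + j : ℕ) : ℤ) := by push_cast; ring
    have h2 : ((n : ℤ) - j) = ((n - j : ℕ) : ℤ) := by
      rw [Nat.cast_sub hj]
    rw [h1, h2]
    exact coeff_qq_mul ↑μ hposM (m + j) (n - j) (by omega)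
  have hXval2 : X ↑[m, n] ↑μ = ∑ j ∈ Finset.range (n + 1), cRO j *
      (Multiset.card (((↑μ : Multiset ℕ).powerset).filter (fun s => s.sum = m + j)) : FF) := by
    rw [hXval, Finset.mul_sum]
    apply Finset.sum_congr rfl
    intro j hj
    rw [← hcnt j (by simpa using Nat.lt_succ_iff.mp (Finset.mem_range.mp hj))]
    ring
  -- rewrite counts in terms of sublists
  have hcard : ∀ a : ℕ,
      Multiset.card (((↑μ : Multiset ℕ).powerset).filter (fun s => s.sum = a))
        = (μ.sublists.filter (fun τ => τ.sum = a)).length := fun a => card_filter_powerset μ a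
  -- the generating sum over sublists
  have hbound : ∀ τ ∈ μ.sublists, τ.sum < m + n + 1 := by
    intro τ hτ
    have hsub := List.mem_sublists.mp hτ
    have := List.Sublist.sum_le_sum hsub (fun a _ => Nat.zero_le a)
    omega
  have hgroup := list_group (m + n + 1)
    (fun j => if m + 1 ≤ j then tF ^ (j - (m + 1)) else 0) μ.sublists hbound
  have hmap : (μ.sublists.map fun τ =>
      if m + 1 ≤ τ.sum then tF ^ (τ.sum - (m + 1)) else 0).sum
      = ∑ j ∈ Finset.range (m + n + 1),
          ((μ.sublists.filter (fun τ => τ.sum = j)).length : FF) *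
            (if m + 1 ≤ j then tF ^ (j - (m + 1)) else 0) := hgroup
  rw [hmap]
  -- split the range
  have hsplit : ∑ j ∈ Finset.range (m + n + 1),
      ((μ.sublists.filter (fun τ => τ.sum = j)).length : FF) *
        (if m + 1 ≤ j then tF ^ (j - (m + 1)) else 0)
      = ∑ i ∈ Finset.range n,
          ((μ.sublists.filter (fun τ => τ.sum = (m + 1 + i))).length : FF) * tF ^ i := by
    rw [show m + n + 1 = (m + 1) + n by ring, sum_range_add']
    rw [Finset.sum_eq_zero, zero_add]
    · apply Finset.sum_congr rfl
      intro i _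
      rw [if_pos (by omega)]
      congr 2
      omega
    · intro j hj
      rw [if_neg (by simp at hj; omega), mul_zero]
  rw [hsplit]
  -- symmetric count
  have hsymm : ((μ.sublists.filter (fun τ => τ.sum = n)).length : FF)
      = ((μ.sublists.filter (fun τ => τ.sum = m)).length : FF) := by
    rw [← hcard n, ← hcard m]
    exact_mod_cast congrArg (Nat.cast (R := FF))
      (cnt_symm hposM (by omega : n + m = (↑μ : Multiset ℕ).sum))
  rw [hsymm, hXval2]
  -- final algebraic identity
  rw [Finset.sum_range_succ']
  simp only [hcard]
  rw [Finset.mul_sum]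
  congr 1
  · apply Finset.sum_congr rfl
    intro i _
    rw [show m + (i + 1) = m + 1 + i by ring]
    rw [show cRO (i + 1) = tF ^ (i + 1) - tF ^ i from rfl]
    ring
  · rw [show cRO 0 = 1 from rfl, one_mul, Nat.add_zero]

end
end Green
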